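/- Let ρ, Θ, 𝒯 : ℝ × ℝ³ → ℝ and u, v : ℝ × ℝ³ → ℝ³ be continuously differentiable, and let G : ℝ → ℝ be continuously differentiable. Assume there is a compact set K ⊂ ℝ³ such that ρ(t,·) is supported in K for every t, and that at every point: ∂_t ρ + div_x(ρu) = 0, ∂_t Θ + u·∇_x Θ = 0, and ∂_t 𝒯 + v·∇_x 𝒯 = 0. Then for all times τ₁ ≤ τ₂: ∫_{ℝ³} (1/2) ρ |G(Θ) − 𝒯|² dx evaluated at t = τ₂ minus the same integral at t = τ₁ equals ∫_{τ₁}^{τ₂} ∫_{ℝ³} ρ (G(Θ) − 𝒯)(v − u)·∇_x 𝒯 dx dt. -/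

import Mathlib

open MeasureTheory RealInnerProductSpace

/-- Three-dimensional Euclidean space. -/
abbrev E3 : Type := EuclideanSpace ℝ (Fin 3)

/-- Divergence of a vector field on `ℝ³`. -/
noncomputable def div3 (V : E3 → E3) (x : E3) : ℝ :=
  ∑ i : Fin 3, ⟪fderiv ℝ V x (EuclideanSpace.single i 1), EuclideanSpace.single i 1⟫

open Set

/- ### Auxiliary lemmas -/

lemma SLaux.inner_gradient (g : E3 → ℝ) (x w : E3) : ⟪w, gradient g x⟫ = fderiv ℝ g x w := by
  rw [real_inner_comm, gradient, InnerProductSpace.toDual_symm_apply]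

lemma SLaux.apply_sum (f : Fin 3 → E3) (j : Fin 3) : (∑ i, f i) j = ∑ i, f i j := by
  induction (Finset.univ : Finset (Fin 3)) using Finset.induction with
  | empty => rfl
  | insert _ _ h ih => rw [Finset.sum_insert h, Finset.sum_insert h, ← ih]; rfl

lemma SLaux.sum_single_eq (w : E3) : ∑ i, w i • EuclideanSpace.single i (1:ℝ) = w := by
  ext j; rw [SLaux.apply_sum]; simp [EuclideanSpace.single_apply, Finset.sum_ite_eq]

lemma SLaux.clm_apply_eq_sum (ℓ : E3 →L[ℝ] ℝ) (w : E3) :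
    ℓ w = ∑ i, w i * ℓ (EuclideanSpace.single i 1) := by
  conv_lhs => rw [← SLaux.sum_single_eq w]
  rw [map_sum]; simp [smul_eq_mul]

lemma SLaux.div3_smul {a : E3 → ℝ} {V : E3 → E3} {x : E3}
    (ha : DifferentiableAt ℝ a x) (hV : DifferentiableAt ℝ V x) :
    div3 (fun y => a y • V y) x = fderiv ℝ a x (V x) + a x * div3 V x := by
  unfold div3
  rw [fderiv_fun_smul ha hV, SLaux.clm_apply_eq_sum (fderiv ℝ a x) (V x), Finset.mul_sum,
    ← Finset.sum_add_distrib]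
  congr 1; ext i
  simp only [ContinuousLinearMap.add_apply, ContinuousLinearMap.smul_apply,
    ContinuousLinearMap.smulRight_apply, inner_add_left, real_inner_smul_left]
  have : ⟪V x, EuclideanSpace.single i (1:ℝ)⟫ = V x i := by
    simp [EuclideanSpace.inner_single_right]
  rw [this]; ring

lemma SLaux.div3_eq_zero_of_eventually_zero {W : E3 → E3} {x : E3}
    (h : ∀ᶠ y in nhds x, W y = 0) : div3 W x = 0 := by
  unfold div3
  have : fderiv ℝ W x = fderiv ℝ (fun _ : E3 => (0 : E3)) x :=
    Filter.EventuallyEq.fderiv_eq h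
  rw [this, fderiv_fun_const]
  simp

lemma SLaux.div3_continuous {W : E3 → E3} (hW : ContDiff ℝ 1 W) : Continuous (div3 W) := by
  unfold div3
  refine continuous_finset_sum _ (fun i _ => ?_)
  exact Continuous.inner
    ((ContinuousLinearMap.apply ℝ E3 (EuclideanSpace.single i 1)).continuous.comp
      (hW.continuous_fderiv one_ne_zero)) continuous_const

noncomputable abbrev SLaux.ee : E3 ≃L[ℝ] (Fin 3 → ℝ) := EuclideanSpace.equiv (Fin 3) ℝ

open SLaux in
lemma SLaux.div3_conj (W : E3 → E3) (y : Fin 3 → ℝ) :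
    (∑ i, fderiv ℝ (fun z => ee (W (ee.symm z))) y (Pi.single i 1) i)
      = div3 W (ee.symm y) := by
  have h1 : fderiv ℝ (fun z => ee (W (ee.symm z))) y
      = (ee : E3 →L[ℝ] (Fin 3 → ℝ)).comp ((fderiv ℝ W (ee.symm y)).comp
          (ee.symm : (Fin 3 → ℝ) →L[ℝ] E3)) := by
    rw [show (fun z => ee (W (ee.symm z))) = (⇑ee ∘ W) ∘ ⇑ee.symm by rfl]
    rw [ContinuousLinearEquiv.comp_right_fderiv, ContinuousLinearEquiv.comp_fderiv,
      ContinuousLinearMap.comp_assoc]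
  rw [h1]
  unfold div3
  congr 1; ext i
  have h2 : (ee.symm : (Fin 3 → ℝ) →L[ℝ] E3) (Pi.single i 1) = EuclideanSpace.single i 1 := rfl
  simp only [ContinuousLinearMap.comp_apply, h2]
  have h3 : ∀ z : E3, (ee : E3 →L[ℝ] (Fin 3 → ℝ)) z i = z i := fun z => rfl
  rw [h3]
  simp [EuclideanSpace.inner_single_right]

open SLaux in
lemma SLaux.integral_div3_eq_zero {W : E3 → E3} (hW : ContDiff ℝ 1 W)
    (hsupp : HasCompactSupport W) : ∫ x : E3, div3 W x = 0 := by
  set V : (Fin 3 → ℝ) → (Fin 3 → ℝ) := fun z => ee (W (ee.symm z)) with hV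
  have hmp := EuclideanSpace.volume_preserving_symm_measurableEquiv_toLp (Fin 3)
  have key : ∫ x : E3, div3 W x = ∫ y : Fin 3 → ℝ, ∑ i, fderiv ℝ V y (Pi.single i 1) i := by
    rw [← hmp.integral_comp (MeasurableEquiv.toLp 2 (Fin 3 → ℝ)).symm.measurableEmbedding]
    congr 1; ext x
    have : (MeasurableEquiv.toLp 2 (Fin 3 → ℝ)).symm x = ee x := rfl
    rw [this, div3_conj W (ee x), ContinuousLinearEquiv.symm_apply_apply]
  rw [key]
  have hVc : ContDiff ℝ 1 V :=
    (ee.contDiff.comp hW).comp ee.symm.contDiff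
  have hVsupp : HasCompactSupport V := by
    have : V = (⇑ee ∘ W) ∘ ⇑ee.symm := rfl
    rw [this]
    exact (hsupp.comp_left (by simp)).comp_homeomorph ee.symm.toHomeomorph
  obtain ⟨R, hR0, hRball⟩ : ∃ R : ℝ, 0 < R ∧ tsupport V ⊆ Metric.ball 0 R := by
    obtain ⟨R, hR⟩ := hVsupp.isBounded.subset_ball 0
    exact ⟨max R 1, by positivity, hR.trans (Metric.ball_subset_ball (le_max_left _ _))⟩
  set a : Fin 3 → ℝ := fun _ => -R
  set b : Fin 3 → ℝ := fun _ => R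
  have hab : a ≤ b := fun i => by simp [a, b]; linarith
  have hVzero : ∀ z : Fin 3 → ℝ, R ≤ ‖z‖ → V z = 0 := by
    intro z hz
    by_contra h
    have := hRball (subset_tsupport V (by simpa [Function.mem_support] using h))
    rw [Metric.mem_ball, dist_zero_right] at this
    linarith
  have hdiv := MeasureTheory.integral_divergence_of_hasFDerivAt_off_countable a b hab V
    (fun y => fderiv ℝ V y) ∅ countable_empty (hVc.continuous.continuousOn)
    (fun x _ => (hVc.differentiable one_ne_zero x).hasFDerivAt)
    (by
      have : Continuous fun y => ∑ i, fderiv ℝ V y (Pi.single i 1) i := by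
        refine continuous_finset_sum _ (fun i _ => ?_)
        exact (continuous_apply i).comp
          ((ContinuousLinearMap.apply ℝ (Fin 3 → ℝ) (Pi.single i 1)).continuous.comp
            (hVc.continuous_fderiv one_ne_zero))
      exact this.continuousOn.integrableOn_compact isCompact_Icc)
  have hface : ∀ (i : Fin 3) (c : ℝ), |c| = R → ∀ x : Fin 2 → ℝ,
      V (Fin.insertNth i c x) = 0 := by
    intro i c hc x
    apply hVzero
    set p : Fin 3 → ℝ := Fin.insertNth i c x with hp
    have h1 : p i = c := by rw [hp]; exact @Fin.insertNth_apply_same 2 (fun _ => ℝ) i c x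
    have h2 : ‖p i‖ ≤ ‖p‖ := norm_le_pi_norm p i
    rw [h1, Real.norm_eq_abs, hc] at h2
    exact h2
  rw [show (∑ i : Fin 3, ((∫ x in Icc (a ∘ i.succAbove) (b ∘ i.succAbove),
        V (i.insertNth (b i) x) i) - ∫ x in Icc (a ∘ i.succAbove) (b ∘ i.succAbove),
        V (i.insertNth (a i) x) i)) = 0 from ?_] at hdiv
  · rw [← hdiv]
    symm
    apply MeasureTheory.setIntegral_eq_integral_of_forall_compl_eq_zero
    intro z hz
    have hz' : z ∉ tsupport V := by
      intro hmem
      have := hRball hmem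
      rw [Metric.mem_ball, dist_zero_right] at this
      apply hz
      rw [Set.mem_Icc]
      constructor <;> (intro i; have hi := (abs_le.mp ((norm_le_pi_norm z i).trans this.le)))
      · simpa [a] using hi.1
      · simpa [b] using hi.2
    have h0 : fderiv ℝ V z = 0 := by
      by_contra h
      exact hz' (support_fderiv_subset ℝ (by simpa [Function.mem_support] using h))
    simp [h0]
  · apply Finset.sum_eq_zero
    intro i _
    have h1 : ∀ x : Fin 2 → ℝ, V (i.insertNth (b i) x) i = 0 := fun x => by
      rw [hface i (b i) (by simp [b, abs_of_pos hR0]) x]; rfl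
    have h2 : ∀ x : Fin 2 → ℝ, V (i.insertNth (a i) x) i = 0 := fun x => by
      rw [hface i (a i) (by simp [a, abs_of_pos hR0]) x]; rfl
    simp [h1, h2]

section slices
variable {Fc : Type*} [NormedAddCommGroup Fc] [NormedSpace ℝ Fc] {h : ℝ × E3 → Fc}

lemma SLaux.contDiff_slice (hh : ContDiff ℝ 1 h) (t : ℝ) : ContDiff ℝ 1 (fun y => h (t, y)) :=
  hh.comp (contDiff_const.prodMk contDiff_id)

lemma SLaux.hasDerivAt_slice (hh : Differentiable ℝ h) (t : ℝ) (x : E3) :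
    HasDerivAt (fun s => h (s, x)) (fderiv ℝ h (t, x) (1, 0)) t := by
  have h1 : HasDerivAt (fun s : ℝ => (s, x)) ((1 : ℝ), (0 : E3)) t :=
    (hasDerivAt_id t).prodMk (hasDerivAt_const t x)
  exact (hh (t, x)).hasFDerivAt.comp_hasDerivAt t h1

lemma SLaux.hasFDerivAt_slice (hh : Differentiable ℝ h) (t : ℝ) (x : E3) :
    HasFDerivAt (fun y => h (t, y))
      ((fderiv ℝ h (t, x)).comp (ContinuousLinearMap.inr ℝ ℝ E3)) x := by
  have h1 : HasFDerivAt (fun y : E3 => ((t : ℝ), y)) (ContinuousLinearMap.inr ℝ ℝ E3) x :=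
    (hasFDerivAt_const t x).prodMk (hasFDerivAt_id x)
  exact (hh (t, x)).hasFDerivAt.comp x h1

lemma SLaux.fderiv_slice_apply (hh : Differentiable ℝ h) (t : ℝ) (x : E3) (w : E3) :
    fderiv ℝ (fun y => h (t, y)) x w = fderiv ℝ h (t, x) (0, w) := by
  rw [(SLaux.hasFDerivAt_slice hh t x).fderiv]; rfl

end slices

open SLaux in
lemma SLaux.key_pointwise
    (ρ Θ T : ℝ → E3 → ℝ) (u v : ℝ → E3 → E3) (G : ℝ → ℝ)
    (hρ : ContDiff ℝ 1 (fun p : ℝ × E3 => ρ p.1 p.2))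
    (hΘ : ContDiff ℝ 1 (fun p : ℝ × E3 => Θ p.1 p.2))
    (hT : ContDiff ℝ 1 (fun p : ℝ × E3 => T p.1 p.2))
    (hu : ContDiff ℝ 1 (fun p : ℝ × E3 => u p.1 p.2))
    (hG : ContDiff ℝ 1 G)
    (hcont : ∀ t x, deriv (fun s => ρ s x) t + div3 (fun y => ρ t y • u t y) x = 0)
    (htransΘ : ∀ t x, deriv (fun s => Θ s x) t + ⟪u t x, gradient (Θ t) x⟫ = 0)
    (htransT : ∀ t x, deriv (fun s => T s x) t + ⟪v t x, gradient (T t) x⟫ = 0)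
    (t : ℝ) (x : E3) :
    deriv (fun s => (1 / 2) * ρ s x * (G (Θ s x) - T s x) ^ 2) t
      + div3 (fun y => ((1 / 2) * ρ t y * (G (Θ t y) - T t y) ^ 2) • u t y) x
      = ρ t x * (G (Θ t x) - T t x) * ⟪v t x - u t x, gradient (T t) x⟫ := by
  have hρd : Differentiable ℝ (fun p : ℝ × E3 => ρ p.1 p.2) := hρ.differentiable one_ne_zero
  have hΘd : Differentiable ℝ (fun p : ℝ × E3 => Θ p.1 p.2) := hΘ.differentiable one_ne_zero
  have hTd : Differentiable ℝ (fun p : ℝ × E3 => T p.1 p.2) := hT.differentiable one_ne_zero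
  have hGd : Differentiable ℝ G := hG.differentiable one_ne_zero
  have hρx : DifferentiableAt ℝ (ρ t) x := ((contDiff_slice hρ t).differentiable one_ne_zero x)
  have hΘx : DifferentiableAt ℝ (Θ t) x := ((contDiff_slice hΘ t).differentiable one_ne_zero x)
  have hTx : DifferentiableAt ℝ (T t) x := ((contDiff_slice hT t).differentiable one_ne_zero x)
  have hux : DifferentiableAt ℝ (u t) x := ((contDiff_slice hu t).differentiable one_ne_zero x)
  set ρ' := fderiv ℝ (fun p : ℝ × E3 => ρ p.1 p.2) (t, x) (1, 0) with hρ'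
  set Θ' := fderiv ℝ (fun p : ℝ × E3 => Θ p.1 p.2) (t, x) (1, 0) with hΘ'
  set T' := fderiv ℝ (fun p : ℝ × E3 => T p.1 p.2) (t, x) (1, 0) with hT'
  have hρt : HasDerivAt (fun s => ρ s x) ρ' t := hasDerivAt_slice hρd t x
  have hΘt : HasDerivAt (fun s => Θ s x) Θ' t := hasDerivAt_slice hΘd t x
  have hTt : HasDerivAt (fun s => T s x) T' t := hasDerivAt_slice hTd t x
  have eρ : ρ' = - div3 (fun y => ρ t y • u t y) x := by
    have := hcont t x; rw [hρt.deriv] at this; linarith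
  have eΘ : Θ' = - fderiv ℝ (Θ t) x (u t x) := by
    have := htransΘ t x
    rw [hΘt.deriv, inner_gradient (Θ t) x (u t x)] at this; linarith
  have eT : T' = - fderiv ℝ (T t) x (v t x) := by
    have := htransT t x
    rw [hTt.deriv, inner_gradient (T t) x (v t x)] at this; linarith
  have h1 : HasDerivAt (fun s => G (Θ s x)) (deriv G (Θ t x) * Θ') t :=
    (hGd (Θ t x)).hasDerivAt.comp t hΘt
  have h2 : HasDerivAt (fun s => G (Θ s x) - T s x) (deriv G (Θ t x) * Θ' - T') t := h1.sub hTt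
  have h3 : HasDerivAt (fun s => (G (Θ s x) - T s x) ^ 2)
      ((2 : ℕ) * (G (Θ t x) - T t x) ^ 1 * (deriv G (Θ t x) * Θ' - T')) t := h2.pow 2
  have h4 : HasDerivAt (fun s => (1 / 2) * ρ s x * (G (Θ s x) - T s x) ^ 2)
      ((1 / 2 * ρ') * (G (Θ t x) - T t x) ^ 2
        + (1 / 2 * ρ t x) *
            ((2 : ℕ) * (G (Θ t x) - T t x) ^ 1 * (deriv G (Θ t x) * Θ' - T'))) t := by
    have := (hρt.const_mul (1 / 2 : ℝ)).mul h3
    simpa [Pi.mul_def, mul_comm, mul_assoc, mul_left_comm] using this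
  rw [h4.deriv]
  have hfield : (fun y => ((1 / 2) * ρ t y * (G (Θ t y) - T t y) ^ 2) • u t y)
      = (fun y => ((1 / 2) * (G (Θ t y) - T t y) ^ 2) • (ρ t y • u t y)) := by
    funext y; rw [smul_smul]; congr 1; ring
  have hGx : HasFDerivAt (fun y => G (Θ t y)) (deriv G (Θ t x) • fderiv ℝ (Θ t) x) x :=
    (hGd (Θ t x)).hasDerivAt.comp_hasFDerivAt x hΘx.hasFDerivAt
  have hFx : HasFDerivAt (fun y => G (Θ t y) - T t y)
      (deriv G (Θ t x) • fderiv ℝ (Θ t) x - fderiv ℝ (T t) x) x := hGx.sub hTx.hasFDerivAt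
  have hF2 : HasFDerivAt (fun y => (G (Θ t y) - T t y) ^ 2)
      ((G (Θ t x) - T t x) • (deriv G (Θ t x) • fderiv ℝ (Θ t) x - fderiv ℝ (T t) x)
        + (G (Θ t x) - T t x) •
            (deriv G (Θ t x) • fderiv ℝ (Θ t) x - fderiv ℝ (T t) x)) x := by
    have := hFx.mul hFx
    simpa [pow_two, Pi.mul_def] using this
  have hq : HasFDerivAt (fun y => (1 / 2 : ℝ) * (G (Θ t y) - T t y) ^ 2)
      ((1 / 2 : ℝ) •
        ((G (Θ t x) - T t x) • (deriv G (Θ t x) • fderiv ℝ (Θ t) x - fderiv ℝ (T t) x)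
          + (G (Θ t x) - T t x) •
              (deriv G (Θ t x) • fderiv ℝ (Θ t) x - fderiv ℝ (T t) x))) x :=
    hF2.const_mul (1 / 2)
  have hdiv : div3 (fun y => ((1 / 2) * ρ t y * (G (Θ t y) - T t y) ^ 2) • u t y) x
      = (G (Θ t x) - T t x) *
          (deriv G (Θ t x) * (ρ t x * fderiv ℝ (Θ t) x (u t x))
            - ρ t x * fderiv ℝ (T t) x (u t x))
        + ((1 / 2) * (G (Θ t x) - T t x) ^ 2) * div3 (fun y => ρ t y • u t y) x := by
    rw [hfield, div3_smul (V := fun y => ρ t y • u t y) hq.differentiableAt (hρx.smul hux), hq.fderiv]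
    simp only [ContinuousLinearMap.smul_apply, ContinuousLinearMap.sub_apply,
      ContinuousLinearMap.add_apply, ContinuousLinearMap.map_smul, smul_eq_mul]
    ring
  rw [hdiv, inner_gradient (T t) x (v t x - u t x), map_sub, eρ, eΘ, eT]
  ring

open SLaux

/-- Integral form of the stability lemma for classical solutions: if the compactly
supported density `ρ` satisfies the continuity equation with velocity `u`, `Θ` is
transported by `u`, `𝒯` is transported by `v`, and `G` is a `C¹` renormalization, then
`[∫ ½ρ|G(Θ)−𝒯|² dx]_{τ₁}^{τ₂} = ∫_{τ₁}^{τ₂} ∫ ρ(G(Θ)−𝒯)(v−u)·∇𝒯 dx dt`. -/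
theorem stability_lemma_integral
    (ρ Θ T : ℝ → E3 → ℝ) (u v : ℝ → E3 → E3) (G : ℝ → ℝ)
    (hρ : ContDiff ℝ 1 (fun p : ℝ × E3 => ρ p.1 p.2))
    (hΘ : ContDiff ℝ 1 (fun p : ℝ × E3 => Θ p.1 p.2))
    (hT : ContDiff ℝ 1 (fun p : ℝ × E3 => T p.1 p.2))
    (hu : ContDiff ℝ 1 (fun p : ℝ × E3 => u p.1 p.2))
    (hv : ContDiff ℝ 1 (fun p : ℝ × E3 => v p.1 p.2))
    (hG : ContDiff ℝ 1 G)
    (hsupp : ∃ K : Set E3, IsCompact K ∧ ∀ t, Function.support (ρ t) ⊆ K)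
    (hcont : ∀ t x, deriv (fun s => ρ s x) t + div3 (fun y => ρ t y • u t y) x = 0)
    (htransΘ : ∀ t x, deriv (fun s => Θ s x) t + ⟪u t x, gradient (Θ t) x⟫ = 0)
    (htransT : ∀ t x, deriv (fun s => T s x) t + ⟪v t x, gradient (T t) x⟫ = 0) :
    ∀ τ₁ τ₂ : ℝ, τ₁ ≤ τ₂ →
      (∫ x : E3, (1 / 2) * ρ τ₂ x * (G (Θ τ₂ x) - T τ₂ x) ^ 2)
          - ∫ x : E3, (1 / 2) * ρ τ₁ x * (G (Θ τ₁ x) - T τ₁ x) ^ 2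
        = ∫ t in τ₁..τ₂, ∫ x : E3,
            ρ t x * (G (Θ t x) - T t x) * ⟪v t x - u t x, gradient (T t) x⟫ := by
  obtain ⟨K, hKc, hKs⟩ := hsupp
  intro τ₁ τ₂ _
  -- the joint modulated energy density
  have hf1 : ContDiff ℝ 1
      (fun p : ℝ × E3 => (1 / 2) * ρ p.1 p.2 * (G (Θ p.1 p.2) - T p.1 p.2) ^ 2) :=
    (contDiff_const.mul hρ).mul (((hG.comp hΘ).sub hT).pow 2)
  have hfd : Differentiable ℝ
      (fun p : ℝ × E3 => (1 / 2) * ρ p.1 p.2 * (G (Θ p.1 p.2) - T p.1 p.2) ^ 2) :=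
    hf1.differentiable one_ne_zero
  have hρ0 : ∀ s y, y ∉ K → ρ s y = 0 := by
    intro s y hy
    by_contra h
    exact hy (hKs s h)
  have hKopen : IsOpen {p : ℝ × E3 | p.2 ∉ K} :=
    (hKc.isClosed.isOpen_compl).preimage continuous_snd
  -- partial time derivative of the density
  set F' : ℝ → E3 → ℝ := fun s y =>
    fderiv ℝ (fun p : ℝ × E3 => (1 / 2) * ρ p.1 p.2 * (G (Θ p.1 p.2) - T p.1 p.2) ^ 2)
      (s, y) (1, 0) with hF'def
  have hF'zero : ∀ s y, y ∉ K → F' s y = 0 := by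
    intro s y hy
    have hev : (fun p : ℝ × E3 => (1 / 2) * ρ p.1 p.2 * (G (Θ p.1 p.2) - T p.1 p.2) ^ 2)
        =ᶠ[nhds (s, y)] (fun _ => (0 : ℝ)) := by
      filter_upwards [hKopen.mem_nhds (by simpa using hy)] with p hp
      simp [hρ0 p.1 p.2 hp]
    rw [hF'def]
    simp only
    rw [hev.fderiv_eq, fderiv_fun_const]
    simp
  have hF'jcont : Continuous (fun p : ℝ × E3 =>
      fderiv ℝ (fun q : ℝ × E3 => (1 / 2) * ρ q.1 q.2 * (G (Θ q.1 q.2) - T q.1 q.2) ^ 2)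
        p (1, 0)) :=
    (ContinuousLinearMap.apply ℝ ℝ ((1 : ℝ), (0 : E3))).continuous.comp
      (hf1.continuous_fderiv one_ne_zero)
  -- integrability of continuous functions vanishing off K
  have hint : ∀ g : E3 → ℝ, Continuous g → (∀ y, y ∉ K → g y = 0) → Integrable g := by
    intro g hg h0
    exact hg.integrable_of_hasCompactSupport (HasCompactSupport.intro hKc h0)
  have hball : ∀ t₀ : ℝ, ∀ s ∈ Metric.ball t₀ 1, s ∈ Icc (t₀ - 1) (t₀ + 1) := by
    intro t₀ s hs
    rw [Metric.mem_ball, Real.dist_eq] at hs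
    have := abs_le.mp hs.le
    constructor <;> linarith [this.1, this.2]
  -- differentiation under the integral sign
  have main : ∀ t₀ : ℝ, Integrable (F' t₀) ∧
      HasDerivAt (fun s => ∫ x : E3, (1 / 2) * ρ s x * (G (Θ s x) - T s x) ^ 2)
        (∫ x : E3, F' t₀ x) t₀ := by
    intro t₀
    obtain ⟨C, hC⟩ := ((isCompact_Icc (a := t₀ - 1) (b := t₀ + 1)).prod hKc).exists_bound_of_continuousOn
      (f := fun p : ℝ × E3 =>
        fderiv ℝ (fun q : ℝ × E3 => (1 / 2) * ρ q.1 q.2 * (G (Θ q.1 q.2) - T q.1 q.2) ^ 2)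
          p (1, 0)) hF'jcont.continuousOn
    refine hasDerivAt_integral_of_dominated_loc_of_deriv_le
      (F := fun s x => (1 / 2) * ρ s x * (G (Θ s x) - T s x) ^ 2)
      (F' := F') (bound := K.indicator (fun _ => max C 0)) (μ := volume)
      (Metric.ball_mem_nhds t₀ one_pos) ?_ ?_ ?_ ?_ ?_ ?_
    · exact Filter.Eventually.of_forall fun s =>
        ((contDiff_slice hf1 s).continuous).aestronglyMeasurable
    · exact hint _ (contDiff_slice hf1 t₀).continuous (fun y hy => by simp [hρ0 t₀ y hy])
    · exact (hF'jcont.comp (continuous_const.prodMk continuous_id)).aestronglyMeasurable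
    · refine Filter.Eventually.of_forall fun y s hs => ?_
      by_cases hy : y ∈ K
      · rw [Set.indicator_of_mem hy]
        exact le_trans (hC (s, y) ⟨hball t₀ s hs, hy⟩) (le_max_left _ _)
      · rw [Set.indicator_of_notMem hy, hF'zero s y hy]
        simp
    · rw [integrable_indicator_iff hKc.measurableSet]
      exact integrableOn_const hKc.measure_lt_top.ne
    · exact Filter.Eventually.of_forall fun y s _ => hasDerivAt_slice hfd s y
  -- identification of the derivative with the right-hand side integrand
  have hRint : ∀ t₀ : ℝ, ∫ x : E3, F' t₀ x
      = ∫ x : E3, ρ t₀ x * (G (Θ t₀ x) - T t₀ x) * ⟪v t₀ x - u t₀ x, gradient (T t₀) x⟫ := by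
    intro t₀
    have hW1 : ContDiff ℝ 1
        (fun y => ((1 / 2) * ρ t₀ y * (G (Θ t₀ y) - T t₀ y) ^ 2) • u t₀ y) :=
      (contDiff_slice hf1 t₀).smul (contDiff_slice hu t₀)
    have hWz : ∀ y, y ∉ K →
        ((1 / 2) * ρ t₀ y * (G (Θ t₀ y) - T t₀ y) ^ 2) • u t₀ y = 0 := by
      intro y hy; simp [hρ0 t₀ y hy]
    have hdiv0 : ∫ x : E3,
        div3 (fun y => ((1 / 2) * ρ t₀ y * (G (Θ t₀ y) - T t₀ y) ^ 2) • u t₀ y) x = 0 :=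
      integral_div3_eq_zero hW1 (HasCompactSupport.intro hKc hWz)
    have hdivz : ∀ y, y ∉ K →
        div3 (fun z => ((1 / 2) * ρ t₀ z * (G (Θ t₀ z) - T t₀ z) ^ 2) • u t₀ z) y = 0 := by
      intro y hy
      apply div3_eq_zero_of_eventually_zero
      filter_upwards [hKc.isClosed.isOpen_compl.mem_nhds hy] with z hz
      exact hWz z hz
    have hdivint : Integrable
        (div3 (fun y => ((1 / 2) * ρ t₀ y * (G (Θ t₀ y) - T t₀ y) ^ 2) • u t₀ y)) :=
      hint _ (div3_continuous hW1) hdivz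
    have hF'int : Integrable (F' t₀) := (main t₀).1
    have hptwise : ∀ x : E3, ρ t₀ x * (G (Θ t₀ x) - T t₀ x) * ⟪v t₀ x - u t₀ x, gradient (T t₀) x⟫
        = F' t₀ x
          + div3 (fun y => ((1 / 2) * ρ t₀ y * (G (Θ t₀ y) - T t₀ y) ^ 2) • u t₀ y) x := by
      intro x
      have h := key_pointwise ρ Θ T u v G hρ hΘ hT hu hG hcont htransΘ htransT t₀ x
      rw [show deriv (fun s => (1 / 2) * ρ s x * (G (Θ s x) - T s x) ^ 2) t₀ = F' t₀ x from
        (hasDerivAt_slice hfd t₀ x).deriv] at h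
      linarith
    calc ∫ x : E3, F' t₀ x
        = (∫ x : E3, F' t₀ x)
          + ∫ x : E3,
              div3 (fun y => ((1 / 2) * ρ t₀ y * (G (Θ t₀ y) - T t₀ y) ^ 2) • u t₀ y) x := by
          rw [hdiv0, add_zero]
      _ = ∫ x : E3, (F' t₀ x
            + div3 (fun y => ((1 / 2) * ρ t₀ y * (G (Θ t₀ y) - T t₀ y) ^ 2) • u t₀ y) x) :=
          (integral_add hF'int hdivint).symm
      _ = ∫ x : E3, ρ t₀ x * (G (Θ t₀ x) - T t₀ x) * ⟪v t₀ x - u t₀ x, gradient (T t₀) x⟫ := by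
          congr 1; funext x; rw [hptwise x]
  -- continuity of the right-hand side in time
  have hTd : Differentiable ℝ (fun p : ℝ × E3 => T p.1 p.2) := hT.differentiable one_ne_zero
  have hginner : ∀ (s : ℝ) (x : E3), (⟪v s x - u s x, gradient (T s) x⟫ : ℝ)
      = fderiv ℝ (fun p : ℝ × E3 => T p.1 p.2) (s, x) ((0 : ℝ), v s x - u s x) := by
    intro s x
    rw [inner_gradient (T s) x (v s x - u s x)]
    exact fderiv_slice_apply hTd s x (v s x - u s x)
  have hgjcont : Continuous (fun p : ℝ × E3 =>
      ρ p.1 p.2 * (G (Θ p.1 p.2) - T p.1 p.2) *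
        fderiv ℝ (fun q : ℝ × E3 => T q.1 q.2) p ((0 : ℝ), v p.1 p.2 - u p.1 p.2)) := by
    refine Continuous.mul (Continuous.mul hρ.continuous
      (((hG.continuous).comp hΘ.continuous).sub hT.continuous)) ?_
    exact (hT.continuous_fderiv one_ne_zero).clm_apply
      (continuous_const.prodMk ((hv.continuous).sub hu.continuous))
  have hRcont : Continuous (fun s => ∫ x : E3,
      ρ s x * (G (Θ s x) - T s x) * ⟪v s x - u s x, gradient (T s) x⟫) := by
    have hrepr : (fun s => ∫ x : E3,
        ρ s x * (G (Θ s x) - T s x) * ⟪v s x - u s x, gradient (T s) x⟫)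
        = fun s => ∫ x : E3, ρ s x * (G (Θ s x) - T s x) *
            fderiv ℝ (fun q : ℝ × E3 => T q.1 q.2) (s, x) ((0 : ℝ), v s x - u s x) := by
      funext s; congr 1; funext x; rw [hginner s x]
    rw [hrepr]
    rw [continuous_iff_continuousAt]
    intro t₀
    obtain ⟨C, hC⟩ := ((isCompact_Icc (a := t₀ - 1) (b := t₀ + 1)).prod hKc).exists_bound_of_continuousOn
      (f := fun p : ℝ × E3 =>
        ρ p.1 p.2 * (G (Θ p.1 p.2) - T p.1 p.2) *
          fderiv ℝ (fun q : ℝ × E3 => T q.1 q.2) p ((0 : ℝ), v p.1 p.2 - u p.1 p.2))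
      hgjcont.continuousOn
    refine continuousAt_of_dominated (bound := K.indicator (fun _ => max C 0)) ?_ ?_ ?_ ?_
    · exact Filter.Eventually.of_forall fun s =>
        (hgjcont.comp (continuous_const.prodMk continuous_id)).aestronglyMeasurable
    · rw [Metric.eventually_nhds_iff_ball]
      refine ⟨1, one_pos, fun s hs => Filter.Eventually.of_forall fun y => ?_⟩
      by_cases hy : y ∈ K
      · rw [Set.indicator_of_mem hy]
        exact le_trans (hC (s, y) ⟨hball t₀ s hs, hy⟩) (le_max_left _ _)
      · rw [Set.indicator_of_notMem hy]
        simp [hρ0 s y hy]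
    · rw [integrable_indicator_iff hKc.measurableSet]
      exact integrableOn_const hKc.measure_lt_top.ne
    · exact Filter.Eventually.of_forall fun y =>
        (hgjcont.comp (continuous_id.prodMk continuous_const)).continuousAt
  -- fundamental theorem of calculus
  have hFTC := intervalIntegral.integral_eq_sub_of_hasDerivAt
    (f := fun s => ∫ x : E3, (1 / 2) * ρ s x * (G (Θ s x) - T s x) ^ 2)
    (f' := fun s => ∫ x : E3,
      ρ s x * (G (Θ s x) - T s x) * ⟪v s x - u s x, gradient (T s) x⟫)
    (a := τ₁) (b := τ₂)
    (fun t _ => (hRint t) ▸ (main t).2)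
    (hRcont.intervalIntegrable τ₁ τ₂)
  rw [hFTC]
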